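/- Let α > 0 and q ≥ 2, and let K ⊂ ℝⁿ be a centrally symmetric compact convex set with nonempty interior that is smooth and (α,q)-uniformly convex with respect to ‖·‖_K. Set C = (q/(2α))^{1/(q−1)}. Then ½‖·‖²_{K°} is differentiable on all of ℝⁿ with ∇½‖·‖²_{K°}(d) = ‖d‖_{K°}·∇‖·‖_{K°}(d) for d ≠ 0 and ∇½‖·‖²_{K°}(0) = 0, and for all d₁, d₂ ∈ K° \ {0}: ‖∇½‖·‖²_{K°}(d₁) − ∇½‖·‖²_{K°}(d₂)‖_K ≤ 2(C + 1)·‖d₁ − d₂‖_{K°}^{1/(q−1)}. -/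

import Mathlib

open scoped InnerProductSpace
open scoped Pointwise
open MeasureTheory

noncomputable section

abbrev Euc (n : ℕ) := EuclideanSpace ℝ (Fin n)

/-- The polar set `K° = {d | ⟪d, x⟫ ≤ 1 for all x ∈ K}`. -/
def polarSet {n : ℕ} (K : Set (Euc n)) : Set (Euc n) := {d | ∀ x ∈ K, ⟪d, x⟫_ℝ ≤ 1}

/-- The normal cone of `K` at `y`. -/
def normalCone {n : ℕ} (K : Set (Euc n)) (y : Euc n) : Set (Euc n) :=
  {d | ∀ x ∈ K, 0 ≤ ⟪d, y - x⟫_ℝ}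

/-- A set is smooth if at each boundary point there is exactly one normal direction in `∂K°`. -/
def SmoothSet {n : ℕ} (K : Set (Euc n)) : Prop :=
  ∀ x ∈ frontier K, ∃! d, d ∈ normalCone K x ∩ frontier (polarSet K)

/-- A set is strictly convex if the midpoint of two distinct boundary points is interior. -/
def StrictlyConvexSet {n : ℕ} (K : Set (Euc n)) : Prop :=
  ∀ x₁ ∈ frontier K, ∀ x₂ ∈ frontier K, x₁ ≠ x₂ → midpoint ℝ x₁ x₂ ∈ interior K

/-- `(α, q)`-uniform convexity of a set w.r.t. its gauge. -/
def UniformlyConvexSet {n : ℕ} (K : Set (Euc n)) (α q : ℝ) : Prop :=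
  ∀ x ∈ K, ∀ y ∈ K, ∀ z ∈ K, ∀ γ ∈ Set.Icc (0:ℝ) 1,
    γ • x + (1 - γ) • y + (α / q * (γ * (1 - γ)) * gauge K (x - y) ^ q) • z ∈ K

/-- The barrier function `F_K(x) = -ln(1 - ‖x‖_K) - ‖x‖_K`. -/
def FK {n : ℕ} (K : Set (Euc n)) (x : Euc n) : ℝ := -Real.log (1 - gauge K x) - gauge K x

/-- Fenchel conjugate of the barrier `F_K` (defined on `D_K = {‖x‖_K < 1}`). -/
def FstarK {n : ℕ} (K : Set (Euc n)) (d : Euc n) : ℝ :=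
  sSup ((fun x => ⟪x, d⟫_ℝ - FK K x) '' {x | gauge K x < 1})

/-- Bregman divergence `D_F(u, v) = F(u) - F(v) - ⟪∇F(v), u - v⟫`. -/
def breg {n : ℕ} (F : Euc n → ℝ) (u v : Euc n) : ℝ :=
  F u - F v - ⟪gradient F v, u - v⟫_ℝ

def l1Ball {n : ℕ} (r : ℝ) : Set (Euc n) := {x | ∑ i, |x i| ≤ r}
def linfBall {n : ℕ} (R : ℝ) : Set (Euc n) := {x | ∀ i, |x i| ≤ R}
def l2Ball {n : ℕ} (r : ℝ) : Set (Euc n) := Metric.closedBall 0 r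
def lqBall {n : ℕ} (q r : ℝ) : Set (Euc n) := {x | ∑ i, |x i| ^ q ≤ r ^ q}


set_option linter.unusedSectionVars false
section Aux
set_option maxHeartbeats 1000000

open Filter Topology

/-- The support function of `K`. -/
def suppFn {n : ℕ} (K : Set (Euc n)) (d : Euc n) : ℝ := sSup ((fun x => ⟪d, x⟫_ℝ) '' K)

variable {n : ℕ} {K : Set (Euc n)} {α q : ℝ}

theorem suppFn_isGreatest (hKcomp : IsCompact K) (hKne : K.Nonempty) (d : Euc n) :
    IsGreatest ((fun x => ⟪d, x⟫_ℝ) '' K) (suppFn K d) := by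
  obtain ⟨x, hx, h⟩ := hKcomp.exists_isMaxOn (α := ℝ) hKne
    ((continuous_const.inner continuous_id).continuousOn)
  have hg : IsGreatest ((fun x => ⟪d, x⟫_ℝ) '' K) (⟪d, x⟫_ℝ) :=
    ⟨⟨x, hx, rfl⟩, by rintro _ ⟨y, hy, rfl⟩; exact h hy⟩
  rwa [suppFn, hg.csSup_eq]

theorem exists_argmax (hKcomp : IsCompact K) (hKne : K.Nonempty) (d : Euc n) :
    ∃ x ∈ K, ⟪d, x⟫_ℝ = suppFn K d := by
  obtain ⟨⟨x, hx, hxe⟩, -⟩ := suppFn_isGreatest hKcomp hKne d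
  exact ⟨x, hx, hxe⟩

theorem inner_le_suppFn (hKcomp : IsCompact K) (hKne : K.Nonempty) {d x : Euc n} (hx : x ∈ K) :
    ⟪d, x⟫_ℝ ≤ suppFn K d := (suppFn_isGreatest hKcomp hKne d).2 ⟨x, hx, rfl⟩

theorem suppFn_le' (hKne : K.Nonempty) {d : Euc n} {c : ℝ} (h : ∀ x ∈ K, ⟪d, x⟫_ℝ ≤ c) :
    suppFn K d ≤ c := csSup_le (hKne.image _) (by rintro _ ⟨y, hy, rfl⟩; exact h y hy)

section Basic
variable (hKcomp : IsCompact K) (hK0 : (0:Euc n) ∈ K)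
include hKcomp hK0

theorem suppFn_nonneg (d : Euc n) : 0 ≤ suppFn K d := by
  have := inner_le_suppFn hKcomp ⟨0, hK0⟩ (d := d) hK0
  simpa using this

theorem suppFn_zero : suppFn K (0 : Euc n) = 0 := by
  refine le_antisymm (suppFn_le' ⟨0, hK0⟩ (fun x hx => by simp)) (suppFn_nonneg hKcomp hK0 0)

theorem suppFn_smul {c : ℝ} (hc : 0 ≤ c) (d : Euc n) :
    suppFn K (c • d) = c * suppFn K d := by
  obtain ⟨x, hx, hxe⟩ := exists_argmax hKcomp ⟨0, hK0⟩ d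
  have h1 : suppFn K (c • d) ≤ c * suppFn K d := by
    refine suppFn_le' ⟨0, hK0⟩ (fun z hz => ?_)
    rw [real_inner_smul_left]
    exact mul_le_mul_of_nonneg_left (inner_le_suppFn hKcomp ⟨0, hK0⟩ hz) hc
  refine le_antisymm h1 ?_
  calc c * suppFn K d = ⟪c • d, x⟫_ℝ := by rw [real_inner_smul_left, hxe]
    _ ≤ suppFn K (c • d) := inner_le_suppFn hKcomp ⟨0, hK0⟩ hx

theorem suppFn_add_le (d₁ d₂ : Euc n) :
    suppFn K (d₁ + d₂) ≤ suppFn K d₁ + suppFn K d₂ := by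
  refine suppFn_le' ⟨0, hK0⟩ (fun z hz => ?_)
  rw [inner_add_left]
  exact add_le_add (inner_le_suppFn hKcomp ⟨0, hK0⟩ hz) (inner_le_suppFn hKcomp ⟨0, hK0⟩ hz)

theorem suppFn_neg (hKsymm : ∀ x ∈ K, -x ∈ K) (d : Euc n) :
    suppFn K (-d) = suppFn K d := by
  have key : ∀ e : Euc n, suppFn K (-e) ≤ suppFn K e := by
    intro e
    refine suppFn_le' ⟨0, hK0⟩ (fun z hz => ?_)
    have : ⟪-e, z⟫_ℝ = ⟪e, -z⟫_ℝ := by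
      rw [inner_neg_left, inner_neg_right]
    rw [this]
    exact inner_le_suppFn hKcomp ⟨0, hK0⟩ (hKsymm z hz)
  refine le_antisymm (key d) ?_
  have := key (-d)
  rwa [neg_neg] at this

end Basic

section GaugeBasic
variable (hKcomp : IsCompact K) (hKconv : Convex ℝ K) (hKi : (0:Euc n) ∈ interior K)
include hKcomp hKconv hKi

theorem mem_iff_gauge_le_one {x : Euc n} : x ∈ K ↔ gauge K x ≤ 1 := by
  rw [gauge_le_one_iff_mem_closure hKconv (mem_interior_iff_mem_nhds.1 hKi),
    hKcomp.isClosed.closure_eq]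

theorem gauge_K_pos {x : Euc n} (hx : x ≠ 0) : 0 < gauge K x := by
  rw [gauge_pos (absorbent_nhds_zero (mem_interior_iff_mem_nhds.1 hKi))
    (NormedSpace.isVonNBounded_of_isBounded _ hKcomp.isBounded)]
  exact hx

theorem inner_le_suppFn_mul_gauge (d x : Euc n) :
    ⟪d, x⟫_ℝ ≤ suppFn K d * gauge K x := by
  rcases eq_or_ne x 0 with rfl | hx
  · simp
  · have hg : 0 < gauge K x := gauge_K_pos hKcomp hKconv hKi hx
    have hmem : (gauge K x)⁻¹ • x ∈ K := by
      rw [mem_iff_gauge_le_one hKcomp hKconv hKi, gauge_smul_of_nonneg (by positivity) x,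
        smul_eq_mul, inv_mul_cancel₀ hg.ne']
    have := inner_le_suppFn hKcomp ⟨0, interior_subset hKi⟩ (d := d) hmem
    rw [real_inner_smul_right] at this
    calc ⟪d, x⟫_ℝ = gauge K x * ((gauge K x)⁻¹ * ⟪d, x⟫_ℝ) := by
          field_simp
      _ ≤ gauge K x * suppFn K d := mul_le_mul_of_nonneg_left this hg.le
      _ = suppFn K d * gauge K x := mul_comm _ _

theorem suppFn_pos {d : Euc n} (hd : d ≠ 0) : 0 < suppFn K d := by
  obtain ⟨ε, hε, hball⟩ := Metric.mem_nhds_iff.1 (mem_interior_iff_mem_nhds.1 hKi)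
  have hx : (ε / 2 / ‖d‖) • d ∈ K := by
    apply hball
    have hd' : (0:ℝ) < ‖d‖ := norm_pos_iff.2 hd
    simp only [Metric.mem_ball, dist_zero_right, norm_smul, Real.norm_eq_abs]
    rw [abs_of_nonneg (by positivity)]
    rw [div_mul_cancel₀ _ hd'.ne']
    linarith
  have := inner_le_suppFn hKcomp ⟨0, interior_subset hKi⟩ (d := d) hx
  rw [real_inner_smul_right, real_inner_self_eq_norm_sq] at this
  have hd' : (0:ℝ) < ‖d‖ := norm_pos_iff.2 hd
  calc (0:ℝ) < ε / 2 / ‖d‖ * ‖d‖^2 := by positivity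
    _ ≤ suppFn K d := this

theorem suppFn_le_const_mul_norm :
    ∃ M : ℝ, 0 < M ∧ ∀ d : Euc n, suppFn K d ≤ M * ‖d‖ := by
  obtain ⟨M, hM⟩ := hKcomp.isBounded.subset_closedBall 0
  refine ⟨max M 1, lt_of_lt_of_le one_pos (le_max_right _ _), fun d => ?_⟩
  refine suppFn_le' ⟨0, interior_subset hKi⟩ (fun x hx => ?_)
  calc ⟪d, x⟫_ℝ ≤ ‖d‖ * ‖x‖ := real_inner_le_norm d x
    _ ≤ ‖d‖ * max M 1 := by
        refine mul_le_mul_of_nonneg_left ?_ (norm_nonneg _)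
        have := hM hx
        simp only [Metric.mem_closedBall, dist_zero_right] at this
        exact this.trans (le_max_left _ _)
    _ = max M 1 * ‖d‖ := mul_comm _ _

theorem polarSet_eq : polarSet K = {d | suppFn K d ≤ 1} := by
  ext d
  constructor
  · intro hd
    exact suppFn_le' ⟨0, interior_subset hKi⟩ hd
  · intro hd x hx
    exact (inner_le_suppFn hKcomp ⟨0, interior_subset hKi⟩ hx).trans hd

theorem gauge_polar_eq (d : Euc n) : gauge (polarSet K) d = suppFn K d := by
  rw [gauge_def, polarSet_eq hKcomp hKconv hKi]
  have hset : {r ∈ Set.Ioi (0:ℝ) | d ∈ r • {d' | suppFn K d' ≤ 1}}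
      = {r : ℝ | 0 < r ∧ suppFn K d ≤ r} := by
    ext r
    simp only [Set.mem_setOf_eq, Set.mem_Ioi]
    constructor
    · rintro ⟨hr, y, hy, rfl⟩
      refine ⟨hr, ?_⟩
      rw [suppFn_smul hKcomp (interior_subset hKi) hr.le]
      calc r * suppFn K y ≤ r * 1 := mul_le_mul_of_nonneg_left hy hr.le
        _ = r := mul_one r
    · rintro ⟨hr, hle⟩
      refine ⟨hr, r⁻¹ • d, ?_, by simp [smul_smul, mul_inv_cancel₀ hr.ne']⟩
      rw [Set.mem_setOf_eq, suppFn_smul hKcomp (interior_subset hKi) (by positivity)]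
      rw [inv_mul_le_iff₀ hr, mul_one]
      exact hle
  rw [hset]
  rcases eq_or_lt_of_le (suppFn_nonneg hKcomp (interior_subset hKi) d) with h0 | hpos
  · have : {r : ℝ | 0 < r ∧ suppFn K d ≤ r} = Set.Ioi 0 := by
      ext r; simp only [Set.mem_setOf_eq, Set.mem_Ioi]
      exact ⟨fun h => h.1, fun h => ⟨h, h0 ▸ h.le⟩⟩
    rw [this, csInf_Ioi, ← h0]
  · have : {r : ℝ | 0 < r ∧ suppFn K d ≤ r} = Set.Ici (suppFn K d) := by
      ext r; simp only [Set.mem_setOf_eq, Set.mem_Ici]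
      exact ⟨fun h => h.2, fun h => ⟨lt_of_lt_of_le hpos h, h⟩⟩
    rw [this, csInf_Ici]

end GaugeBasic

section KeyIneq
variable (hKcomp : IsCompact K) (hKconv : Convex ℝ K) (hKi : (0:Euc n) ∈ interior K)
  (hα : 0 < α) (hq : 2 ≤ q) (huc : UniformlyConvexSet K α q)
include hKcomp hKconv hKi hα hq huc

/-- Key quantitative inequality from uniform convexity. -/
theorem key_ineq {d x₁ x₂ : Euc n} (hd : d ≠ 0) (hx₁ : x₁ ∈ K) (hx₂ : x₂ ∈ K)
    (hmax : ⟪d, x₁⟫_ℝ = suppFn K d) :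
    α / q * gauge K (x₁ - x₂) ^ q * suppFn K d ≤ suppFn K d - ⟪d, x₂⟫_ℝ := by
  set h := suppFn K d with hh
  set B := α / q * gauge K (x₁ - x₂) ^ q * h with hB
  set A := h - ⟪d, x₂⟫_ℝ with hA
  have hq0 : (0:ℝ) < q := lt_of_lt_of_le two_pos hq
  have hpos : 0 < h := suppFn_pos hKcomp hKconv hKi hd
  have hA0 : 0 ≤ A := by
    have := inner_le_suppFn hKcomp ⟨0, interior_subset hKi⟩ (d := d) hx₂
    simp only [hA]; linarith
  have hB0 : 0 ≤ B := by
    have : (0:ℝ) ≤ gauge K (x₁ - x₂) ^ q := Real.rpow_nonneg (gauge_nonneg _) q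
    positivity
  have hstep : ∀ γ : ℝ, 0 ≤ γ → γ < 1 → γ * B ≤ A := by
    intro γ hγ0 hγ1
    have hmem := huc x₁ hx₁ x₂ hx₂ x₁ hx₁ γ ⟨hγ0, hγ1.le⟩
    have hle := inner_le_suppFn hKcomp ⟨0, interior_subset hKi⟩ (d := d) hmem
    rw [inner_add_right, inner_add_right, real_inner_smul_right, real_inner_smul_right,
      real_inner_smul_right, hmax] at hle
    have h1γ : 0 < 1 - γ := by linarith
    rw [← sub_nonneg]
    have expand : A - γ * B =
        (h - (γ*h + (1-γ)*⟪d, x₂⟫_ℝ + (α/q*(γ*(1-γ))* gauge K (x₁-x₂) ^ q)*h)) / (1-γ) := by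
      field_simp [hA, hB]
      rw [hA, hB]; field_simp; ring
    rw [expand]
    apply div_nonneg _ h1γ.le
    linarith
  by_contra hcon
  push_neg at hcon
  have hBpos : 0 < B := lt_of_le_of_lt hA0 hcon
  set γ := (A / B + 1) / 2 with hγ
  have hAB : A / B < 1 := (div_lt_one hBpos).2 hcon
  have hAB0 : 0 ≤ A / B := div_nonneg hA0 hBpos.le
  have h1 : γ * B ≤ A := hstep γ (by positivity) (by simp only [hγ]; linarith)
  have h2 : A < γ * B := by
    have : A / B < γ := by simp only [hγ]; linarith
    calc A = A / B * B := by field_simp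
      _ < γ * B := by exact mul_lt_mul_of_pos_right this hBpos
  linarith

/-- Uniqueness of the maximizer. -/
theorem argmax_unique {d x₁ x₂ : Euc n} (hd : d ≠ 0) (hx₁ : x₁ ∈ K) (hx₂ : x₂ ∈ K)
    (hmax₁ : ⟪d, x₁⟫_ℝ = suppFn K d) (hmax₂ : ⟪d, x₂⟫_ℝ = suppFn K d) : x₁ = x₂ := by
  by_contra hne
  have hkey := key_ineq hKcomp hKconv hKi hα hq huc hd hx₁ hx₂ hmax₁
  rw [hmax₂, sub_self] at hkey
  have hq0 : (0:ℝ) < q := lt_of_lt_of_le two_pos hq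
  have hN : 0 < gauge K (x₁ - x₂) := gauge_K_pos hKcomp hKconv hKi (sub_ne_zero.2 hne)
  have hNq : 0 < gauge K (x₁ - x₂) ^ q := Real.rpow_pos_of_pos hN q
  have hpos : 0 < suppFn K d := suppFn_pos hKcomp hKconv hKi hd
  have : 0 < α / q * gauge K (x₁ - x₂) ^ q * suppFn K d := by positivity
  linarith

end KeyIneq

section Deriv
variable (hKcomp : IsCompact K) (hKi : (0:Euc n) ∈ interior K)
include hKcomp hKi

/-- Continuity of the argmax, assuming uniqueness at `d`. -/
theorem argmax_cont {d : Euc n} {xs : Euc n} (hxs : xs ∈ K)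
    (hxmax : ⟪d, xs⟫_ℝ = suppFn K d)
    (huniq : ∀ x ∈ K, ⟪d, x⟫_ℝ = suppFn K d → x = xs) :
    ∀ ε > (0:ℝ), ∃ δ > (0:ℝ), ∀ d' x' : Euc n, x' ∈ K → ⟪d', x'⟫_ℝ = suppFn K d' →
      ‖d' - d‖ < δ → ‖x' - xs‖ ≤ ε := by
  intro ε hε
  by_contra hcon
  push_neg at hcon
  have hseq : ∀ k : ℕ, ∃ d' x' : Euc n, x' ∈ K ∧ ⟪d', x'⟫_ℝ = suppFn K d' ∧
      ‖d' - d‖ < 1/(k+1) ∧ ε < ‖x' - xs‖ := by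
    intro k
    obtain ⟨d', x', h1, h2, h3, h4⟩ := hcon (1/(k+1)) (by positivity)
    exact ⟨d', x', h1, h2, h3, h4⟩
  choose ds xsq hxK hxmax' hdist hfar using hseq
  have hdtend : Tendsto ds atTop (𝓝 d) := by
    rw [tendsto_iff_dist_tendsto_zero]
    apply squeeze_zero (fun k => dist_nonneg) (fun k => ?_)
      tendsto_one_div_add_atTop_nhds_zero_nat
    rw [dist_eq_norm]
    exact (hdist k).le
  obtain ⟨xbar, hxbarK, φ, hφ, hxtend⟩ := hKcomp.tendsto_subseq hxK
  have hdφ : Tendsto (ds ∘ φ) atTop (𝓝 d) := hdtend.comp hφ.tendsto_atTop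
  have hxbarmax : ⟪d, xbar⟫_ℝ = suppFn K d := by
    refine le_antisymm (inner_le_suppFn hKcomp ⟨0, interior_subset hKi⟩ hxbarK) ?_
    refine suppFn_le' ⟨0, interior_subset hKi⟩ (fun y hy => ?_)
    have hk : ∀ k, ⟪ds (φ k), y⟫_ℝ ≤ ⟪ds (φ k), xsq (φ k)⟫_ℝ := fun k => by
      rw [hxmax' (φ k)]
      exact inner_le_suppFn hKcomp ⟨0, interior_subset hKi⟩ hy
    have hL : Tendsto (fun k => ⟪ds (φ k), y⟫_ℝ) atTop (𝓝 ⟪d, y⟫_ℝ) :=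
      hdφ.inner tendsto_const_nhds
    have hR : Tendsto (fun k => ⟪ds (φ k), xsq (φ k)⟫_ℝ) atTop (𝓝 ⟪d, xbar⟫_ℝ) :=
      hdφ.inner hxtend
    exact le_of_tendsto_of_tendsto' hL hR hk
  have : xbar = xs := huniq xbar hxbarK hxbarmax
  subst this
  have hlim : Tendsto (fun k => ‖xsq (φ k) - xbar‖) atTop (𝓝 0) := by
    have := hxtend.sub_const xbar
    rw [show xbar - xbar = 0 by simp] at this
    simpa using this.norm
  have : ε ≤ 0 := ge_of_tendsto hlim (Eventually.of_forall (fun k => (hfar (φ k)).le))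
  linarith

/-- Differentiability of the support function at a point with a unique argmax. -/
theorem suppFn_hasGradientAt {d : Euc n} {xs : Euc n} (hxs : xs ∈ K)
    (hxmax : ⟪d, xs⟫_ℝ = suppFn K d)
    (huniq : ∀ x ∈ K, ⟪d, x⟫_ℝ = suppFn K d → x = xs) :
    HasGradientAt (suppFn K) xs d := by
  rw [HasGradientAt, HasGradientAtFilter]
  rw [hasFDerivAtFilter_iff_isLittleO, Asymptotics.isLittleO_iff]
  intro c hc
  obtain ⟨δ, hδ, hδp⟩ := argmax_cont hKcomp hKi hxs hxmax huniq c hc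
  have hball : Metric.ball d δ ∈ 𝓝 d := Metric.ball_mem_nhds d hδ
  simp only [Filter.prod_pure, Filter.eventually_map]
  filter_upwards [hball] with d' hd'
  obtain ⟨x', hx'K, hx'max⟩ := exists_argmax hKcomp ⟨0, interior_subset hKi⟩ d'
  have hnear : ‖x' - xs‖ ≤ c := by
    apply hδp d' x' hx'K hx'max
    rwa [← dist_eq_norm, ← Metric.mem_ball]
  have hlower : 0 ≤ suppFn K d' - suppFn K d - ⟪xs, d' - d⟫_ℝ := by
    have h1 : ⟪d', xs⟫_ℝ ≤ suppFn K d' :=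
      inner_le_suppFn hKcomp ⟨0, interior_subset hKi⟩ hxs
    have : ⟪d', xs⟫_ℝ = suppFn K d + ⟪xs, d' - d⟫_ℝ := by
      rw [inner_sub_right, ← hxmax, real_inner_comm xs d', real_inner_comm xs d]
      ring
    linarith
  have hupper : suppFn K d' - suppFn K d - ⟪xs, d' - d⟫_ℝ ≤ ‖x' - xs‖ * ‖d' - d‖ := by
    have h1 : ⟪d, x'⟫_ℝ ≤ suppFn K d :=
      inner_le_suppFn hKcomp ⟨0, interior_subset hKi⟩ hx'K
    have h2 : suppFn K d' = ⟪d, x'⟫_ℝ + ⟪x', d' - d⟫_ℝ := by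
      rw [inner_sub_right, ← hx'max, real_inner_comm x' d', real_inner_comm x' d]
      ring
    have h3 : ⟪x', d' - d⟫_ℝ - ⟪xs, d' - d⟫_ℝ = ⟪x' - xs, d' - d⟫_ℝ := by
      rw [inner_sub_left]
    have h4 : ⟪x' - xs, d' - d⟫_ℝ ≤ ‖x' - xs‖ * ‖d' - d‖ := real_inner_le_norm _ _
    linarith
  have hnn : ‖suppFn K d' - suppFn K d - (InnerProductSpace.toDual ℝ (Euc n) xs) (d' - d)‖
      = |suppFn K d' - suppFn K d - ⟪xs, d' - d⟫_ℝ| := by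
    simp [InnerProductSpace.toDual_apply_apply]
  rw [hnn, abs_of_nonneg hlower]
  calc suppFn K d' - suppFn K d - ⟪xs, d' - d⟫_ℝ ≤ ‖x' - xs‖ * ‖d' - d‖ := hupper
    _ ≤ c * ‖d' - d‖ := mul_le_mul_of_nonneg_right hnear (norm_nonneg _)

end Deriv

/-- From gradient of suppFn to gradient of half-square. -/
theorem halfsq_hasGradientAt {d xs : Euc n} (hg : HasGradientAt (suppFn K) xs d) :
    HasGradientAt (fun d => suppFn K d ^ 2 / 2) (suppFn K d • xs) d := by
  have hf : HasFDerivAt (suppFn K) (InnerProductSpace.toDual ℝ (Euc n) xs) d :=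
    hg.hasFDerivAt
  have h2 : HasFDerivAt (fun d => suppFn K d ^ 2 / 2)
      ((1/2 : ℝ) • (suppFn K d • InnerProductSpace.toDual ℝ (Euc n) xs
        + suppFn K d • InnerProductSpace.toDual ℝ (Euc n) xs)) d := by
    have := (hf.mul hf).const_mul (1/2 : ℝ)
    refine this.congr_of_eventuallyEq (Filter.Eventually.of_forall fun d' => ?_)
    simp only [Pi.mul_apply]; ring
  rw [hasGradientAt_iff_hasFDerivAt]
  refine h2.congr_fderiv ?_
  ext u
  simp [smul_smul]
  ring

/-- gradient of half-square at 0 is 0. -/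
theorem halfsq_hasGradientAt_zero (hM : ∃ M : ℝ, 0 < M ∧ ∀ d : Euc n, suppFn K d ≤ M * ‖d‖)
    (h0 : suppFn K 0 = 0) (hnn : ∀ d : Euc n, 0 ≤ suppFn K d) :
    HasGradientAt (fun d => suppFn K d ^ 2 / 2) (0 : Euc n) (0 : Euc n) := by
  obtain ⟨M, hMpos, hM⟩ := hM
  rw [HasGradientAt, HasGradientAtFilter, hasFDerivAtFilter_iff_isLittleO,
    Asymptotics.isLittleO_iff]
  intro c hc
  have hball : Metric.ball (0 : Euc n) (2 * c / M ^ 2) ∈ 𝓝 (0 : Euc n) :=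
    Metric.ball_mem_nhds _ (by positivity)
  simp only [Filter.prod_pure, Filter.eventually_map]
  filter_upwards [hball] with d hd
  simp only [Metric.mem_ball, dist_zero_right] at hd
  have h1 : suppFn K d ^ 2 / 2 ≤ M ^ 2 * ‖d‖ ^ 2 / 2 := by
    have := hM d
    have h2 := hnn d
    nlinarith [norm_nonneg d]
  have heq : ‖suppFn K d ^ 2 / 2 - suppFn K 0 ^ 2 / 2 -
      (InnerProductSpace.toDual ℝ (Euc n) 0) (d - 0)‖ = suppFn K d ^ 2 / 2 := by
    rw [h0]
    simp only [map_zero]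
    rw [ContinuousLinearMap.zero_apply]
    simp only [ne_eq, OfNat.ofNat_ne_zero, not_false_eq_true, zero_pow, zero_div, sub_zero]
    rw [Real.norm_eq_abs, abs_of_nonneg (by positivity)]
  rw [heq]
  have h' : ‖d‖ * M ^ 2 < 2 * c := (lt_div_iff₀ (by positivity)).1 hd
  have : M ^ 2 * ‖d‖ ^ 2 / 2 ≤ c * ‖d - 0‖ := by
    rw [sub_zero]
    nlinarith [norm_nonneg d]
  linarith

section Holder
variable (hKcomp : IsCompact K) (hKconv : Convex ℝ K) (hKsymm : ∀ x ∈ K, -x ∈ K)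
  (hKi : (0:Euc n) ∈ interior K) (hα : 0 < α) (hq : 2 ≤ q)
  (huc : UniformlyConvexSet K α q)
include hKcomp hKconv hKsymm hKi hα hq huc

theorem holder_core {d₁ d₂ x₁ x₂ : Euc n} (hd₁ : d₁ ≠ 0) (hd₂ : d₂ ≠ 0)
    (hp₁ : d₁ ∈ polarSet K) (hp₂ : d₂ ∈ polarSet K)
    (hx₁ : x₁ ∈ K) (hm₁ : ⟪d₁, x₁⟫_ℝ = suppFn K d₁)
    (hx₂ : x₂ ∈ K) (hm₂ : ⟪d₂, x₂⟫_ℝ = suppFn K d₂)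
    (hord : suppFn K d₂ ≤ suppFn K d₁) :
    gauge K (suppFn K d₁ • x₁ - suppFn K d₂ • x₂)
      ≤ 2 * ((q / (2 * α)) ^ (1 / (q - 1)) + 1) * suppFn K (d₁ - d₂) ^ (1 / (q - 1)) := by
  have hK0 : (0:Euc n) ∈ K := interior_subset hKi
  have hKne : K.Nonempty := ⟨0, hK0⟩
  set p : ℝ := q - 1 with hpdef
  have hp1 : (1:ℝ) ≤ p := by simp only [hpdef]; linarith
  have hp0 : (0:ℝ) < p := lt_of_lt_of_le one_pos hp1
  set h₁ := suppFn K d₁ with hh₁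
  set h₂ := suppFn K d₂ with hh₂
  set N := gauge K (x₁ - x₂) with hN
  set hΔ := suppFn K (d₁ - d₂) with hhΔ
  set C : ℝ := (q / (2 * α)) ^ (1 / p) with hC
  have hq0 : (0:ℝ) < q := by linarith
  have h₁pos : 0 < h₁ := suppFn_pos hKcomp hKconv hKi hd₁
  have h₂pos : 0 < h₂ := suppFn_pos hKcomp hKconv hKi hd₂
  have h₁le : h₁ ≤ 1 := suppFn_le' hKne hp₁
  have h₂le : h₂ ≤ 1 := suppFn_le' hKne hp₂
  have hΔnn : 0 ≤ hΔ := suppFn_nonneg hKcomp hK0 _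
  have hΔle : hΔ ≤ 2 := by
    have : suppFn K (d₁ - d₂) ≤ suppFn K d₁ + suppFn K (-d₂) := by
      rw [sub_eq_add_neg]; exact suppFn_add_le hKcomp hK0 d₁ (-d₂)
    rw [suppFn_neg hKcomp hK0 hKsymm] at this
    simp only [hhΔ, hh₁, hh₂] at *
    linarith
  have hNnn : 0 ≤ N := gauge_nonneg _
  have hCnn : 0 ≤ C := Real.rpow_nonneg (by positivity) _
  have hΔp : (0:ℝ) ≤ hΔ ^ (1 / p) := Real.rpow_nonneg hΔnn _
  have key1 := key_ineq hKcomp hKconv hKi hα hq huc hd₁ hx₁ hx₂ hm₁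
  have key2 := key_ineq hKcomp hKconv hKi hα hq huc hd₂ hx₂ hx₁ hm₂
  have hNsymm : gauge K (x₂ - x₁) = N := by
    rw [show x₂ - x₁ = -(x₁ - x₂) from (neg_sub _ _).symm, gauge_neg hKsymm]
  rw [hNsymm] at key2
  have hsum : α / q * N ^ q * (h₁ + h₂) ≤ ⟪d₁ - d₂, x₁ - x₂⟫_ℝ := by
    rw [inner_sub_left, inner_sub_right, inner_sub_right]
    rw [← hh₁] at key1
    rw [← hh₂] at key2
    nlinarith [key1, key2]
  have hpair : ⟪d₁ - d₂, x₁ - x₂⟫_ℝ ≤ hΔ * N :=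
    inner_le_suppFn_mul_gauge hKcomp hKconv hKi _ _
  have bound1 : (h₁ + h₂) * N ≤ 2 * C * hΔ ^ (1 / p) := by
    rcases eq_or_lt_of_le hNnn with hN0 | hNpos
    · rw [← hN0, mul_zero]; positivity
    · have hNq : N ^ q = N ^ p * N := by
        rw [show q = p + 1 by simp [hpdef], Real.rpow_add hNpos, Real.rpow_one]
      have step1 : N ^ p * (h₁ + h₂) ≤ q / α * hΔ := by
        rw [hNq] at hsum
        have e1 : (α / q * N ^ p * (h₁ + h₂)) * N ≤ hΔ * N := by
          calc (α / q * N ^ p * (h₁ + h₂)) * N = α / q * (N ^ p * N) * (h₁ + h₂) := by ring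
            _ ≤ ⟪d₁ - d₂, x₁ - x₂⟫_ℝ := hsum
            _ ≤ hΔ * N := hpair
        have e2 : α / q * N ^ p * (h₁ + h₂) ≤ hΔ := le_of_mul_le_mul_right e1 hNpos
        calc N ^ p * (h₁ + h₂) = q / α * (α / q * N ^ p * (h₁ + h₂)) := by
              field_simp
          _ ≤ q / α * hΔ := by
              apply mul_le_mul_of_nonneg_left e2 (by positivity)
      have hsum_pos : (0:ℝ) < h₁ + h₂ := by linarith
      have hsum_le : h₁ + h₂ ≤ 2 := by linarith
      have step2 : ((h₁ + h₂) * N) ^ p ≤ 2 ^ (p - 1) * (q / α * hΔ) := by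
        rw [Real.mul_rpow hsum_pos.le hNnn]
        have e3 : (h₁ + h₂) ^ p = (h₁ + h₂) ^ (p - 1) * (h₁ + h₂) := by
          rw [← Real.rpow_add_one hsum_pos.ne' (p-1), sub_add_cancel]
        rw [e3]
        have e4 : (h₁ + h₂) ^ (p - 1) ≤ 2 ^ (p - 1) :=
          Real.rpow_le_rpow hsum_pos.le hsum_le (by linarith)
        calc (h₁ + h₂) ^ (p-1) * (h₁ + h₂) * N ^ p
            = (h₁ + h₂) ^ (p-1) * (N ^ p * (h₁ + h₂)) := by ring
          _ ≤ 2 ^ (p-1) * (q / α * hΔ) := by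
              apply mul_le_mul e4 step1 ?_ (by positivity)
              positivity
      have habs : (h₁ + h₂) * N = (((h₁ + h₂) * N) ^ p) ^ (1/p) := by
        rw [← Real.rpow_mul (by positivity), mul_one_div_cancel hp0.ne', Real.rpow_one]
      have step3 : (h₁ + h₂) * N ≤ (2 ^ (p-1) * (q / α * hΔ)) ^ (1/p) := by
        rw [habs]
        exact Real.rpow_le_rpow (by positivity) step2 (by positivity)
      have e5 : 2 ^ (p-1) * (q / α * hΔ) = 2 ^ p * (q / (2*α) * hΔ) := by
        rw [show (2:ℝ) ^ p = 2 ^ (p-1) * 2 from by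
          rw [← Real.rpow_add_one (by norm_num : (2:ℝ) ≠ 0) (p-1), sub_add_cancel]]
        field_simp
      have e6 : (2 ^ p * (q / (2*α) * hΔ)) ^ (1/p) = 2 * (C * hΔ ^ (1/p)) := by
        rw [Real.mul_rpow (by positivity) (by positivity),
          Real.mul_rpow (by positivity) hΔnn,
          ← Real.rpow_mul (by norm_num : (0:ℝ) ≤ 2), mul_one_div_cancel hp0.ne',
          Real.rpow_one]
      calc (h₁ + h₂) * N ≤ (2 ^ (p-1) * (q / α * hΔ)) ^ (1/p) := step3
        _ = 2 * (C * hΔ ^ (1/p)) := by rw [e5, e6]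
        _ = 2 * C * hΔ ^ (1/p) := by ring
  have bound2 : h₁ - h₂ ≤ 2 * hΔ ^ (1/p) := by
    have e7 : h₁ ≤ h₂ + hΔ := by
      have e := suppFn_add_le hKcomp hK0 d₂ (d₁ - d₂)
      rw [show d₂ + (d₁ - d₂) = d₁ by abel] at e
      exact e
    have e8 : hΔ ≤ 2 * hΔ ^ (1/p) := by
      rcases eq_or_lt_of_le hΔnn with h0 | hpos
      · rw [← h0, Real.zero_rpow (one_div_ne_zero hp0.ne')]
        norm_num
      · have e9 : hΔ = hΔ ^ ((p-1)/p) * hΔ ^ (1/p) := by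
          rw [← Real.rpow_add hpos, show (p-1)/p + 1/p = 1 by field_simp; ring, Real.rpow_one]
        have e10 : hΔ ^ ((p-1)/p) ≤ 2 := by
          calc hΔ ^ ((p-1)/p) ≤ 2 ^ ((p-1)/p) :=
                Real.rpow_le_rpow hΔnn hΔle (div_nonneg (by linarith) hp0.le)
            _ ≤ 2 ^ (1:ℝ) := Real.rpow_le_rpow_of_exponent_le one_le_two
                (by rw [div_le_one hp0]; linarith)
            _ = 2 := Real.rpow_one 2
        nlinarith [hΔp]
    linarith
  have habsK : Absorbent ℝ K := absorbent_nhds_zero (mem_interior_iff_mem_nhds.1 hKi)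
  have decomp : h₁ • x₁ - h₂ • x₂ = h₁ • (x₁ - x₂) + (h₁ - h₂) • x₂ := by module
  rw [decomp]
  calc gauge K (h₁ • (x₁ - x₂) + (h₁ - h₂) • x₂)
      ≤ gauge K (h₁ • (x₁ - x₂)) + gauge K ((h₁ - h₂) • x₂) :=
        gauge_add_le hKconv habsK _ _
    _ = h₁ * N + (h₁ - h₂) * gauge K x₂ := by
        rw [gauge_smul_of_nonneg h₁pos.le, gauge_smul_of_nonneg (by linarith : (0:ℝ) ≤ h₁ - h₂),
          smul_eq_mul, smul_eq_mul]
    _ ≤ (h₁ + h₂) * N + (h₁ - h₂) * 1 := by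
        apply add_le_add
        · exact mul_le_mul_of_nonneg_right (by linarith) hNnn
        · exact mul_le_mul_of_nonneg_left (gauge_le_one_of_mem hx₂) (by linarith)
    _ ≤ 2 * C * hΔ ^ (1/p) + 2 * hΔ ^ (1/p) := by
        rw [mul_one]
        exact add_le_add bound1 bound2
    _ = 2 * (C + 1) * hΔ ^ (1/p) := by ring

end Holder

end Aux

/-- For a smooth `(α,q)`-uniformly convex set `K`, the function
`½‖·‖²_{K°}` is differentiable on all of `ℝⁿ`, with gradient `‖d‖_{K°}·∇‖·‖_{K°}(d)` for
`d ≠ 0` and `0` at `0`, and its gradient is `(1/(q-1))`-Hölder on `K° \ {0}` with constant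
`2(C + 1)`, `C = (q/(2α))^{1/(q-1)}`. -/
theorem half_sq_polar_gauge_gradient_holder {n : ℕ}
    (K : Set (Euc n)) (hKcomp : IsCompact K) (hKconv : Convex ℝ K)
    (hKsymm : ∀ x ∈ K, -x ∈ K) (hKint : (interior K).Nonempty)
    (hsmooth : SmoothSet K)
    (α q : ℝ) (hα : 0 < α) (hq : 2 ≤ q)
    (huc : UniformlyConvexSet K α q) :
    (∀ d : Euc n, DifferentiableAt ℝ (fun d => gauge (polarSet K) d ^ 2 / 2) d) ∧
    (∀ d : Euc n, d ≠ 0 →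
      gradient (fun d => gauge (polarSet K) d ^ 2 / 2) d
        = gauge (polarSet K) d • gradient (gauge (polarSet K)) d) ∧
    gradient (fun d => gauge (polarSet K) d ^ 2 / 2) (0 : Euc n) = 0 ∧
    (∀ d₁ ∈ polarSet K \ {0}, ∀ d₂ ∈ polarSet K \ {0},
      gauge K (gradient (fun d => gauge (polarSet K) d ^ 2 / 2) d₁
                - gradient (fun d => gauge (polarSet K) d ^ 2 / 2) d₂)
        ≤ 2 * ((q / (2 * α)) ^ (1 / (q - 1)) + 1)
            * gauge (polarSet K) (d₁ - d₂) ^ (1 / (q - 1))) := by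
  classical
  -- 0 is an interior point
  have hnegK : -K = K := by
    ext y
    rw [Set.mem_neg]
    exact ⟨fun h => by simpa using hKsymm _ h, fun h => hKsymm y h⟩
  obtain ⟨x0, hx0⟩ := hKint
  have hmx : -x0 ∈ interior K := by
    have hopen : IsOpen ((Homeomorph.neg (Euc n)) '' interior K) :=
      (Homeomorph.neg (Euc n)).isOpenMap (interior K) isOpen_interior
    have hsub : (Homeomorph.neg (Euc n)) '' interior K ⊆ K := by
      rintro _ ⟨y, hy, rfl⟩
      exact hKsymm y (interior_subset hy)
    exact interior_maximal hsub hopen ⟨x0, hx0, rfl⟩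
  have hKi : (0:Euc n) ∈ interior K := by
    have hconvi : Convex ℝ (interior K) := hKconv.interior
    have h2 := hconvi hx0 hmx (by norm_num : (0:ℝ) ≤ 1/2) (by norm_num : (0:ℝ) ≤ 1/2)
      (by norm_num)
    rwa [show (1/2:ℝ) • x0 + (1/2:ℝ) • (-x0) = 0 by module] at h2
  have hK0 : (0:Euc n) ∈ K := interior_subset hKi
  have hgeq : gauge (polarSet K) = suppFn K :=
    funext (gauge_polar_eq hKcomp hKconv hKi)
  -- gradient facts at nonzero points
  have main : ∀ d : Euc n, d ≠ 0 → ∃ xs : Euc n, xs ∈ K ∧ ⟪d, xs⟫_ℝ = suppFn K d ∧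
      HasGradientAt (suppFn K) xs d ∧
      HasGradientAt (fun d => suppFn K d ^ 2 / 2) (suppFn K d • xs) d := by
    intro d hd
    obtain ⟨xs, hxs, hxm⟩ := exists_argmax hKcomp ⟨0, hK0⟩ d
    have huniq : ∀ x ∈ K, ⟪d, x⟫_ℝ = suppFn K d → x = xs := fun x hx hm =>
      argmax_unique hKcomp hKconv hKi hα hq huc hd hx hxs hm hxm
    have hgrad : HasGradientAt (suppFn K) xs d :=
      suppFn_hasGradientAt hKcomp hKi hxs hxm huniq
    exact ⟨xs, hxs, hxm, hgrad, halfsq_hasGradientAt hgrad⟩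
  have grad0 : HasGradientAt (fun d => suppFn K d ^ 2 / 2) (0 : Euc n) (0 : Euc n) :=
    halfsq_hasGradientAt_zero (suppFn_le_const_mul_norm hKcomp hKconv hKi)
      (suppFn_zero hKcomp hK0) (suppFn_nonneg hKcomp hK0)
  refine ⟨?_, ?_, ?_, ?_⟩
  · -- differentiability everywhere
    intro d
    rw [hgeq]
    rcases eq_or_ne d 0 with rfl | hd
    · exact grad0.hasFDerivAt.differentiableAt
    · obtain ⟨xs, -, -, -, hg2⟩ := main d hd
      exact hg2.hasFDerivAt.differentiableAt
  · -- gradient formula at d ≠ 0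
    intro d hd
    rw [hgeq]
    obtain ⟨xs, -, -, hg1, hg2⟩ := main d hd
    rw [hg1.gradient, hg2.gradient]
  · -- gradient at 0
    rw [hgeq]
    exact grad0.gradient
  · -- Hölder bound
    intro d₁ hd₁ d₂ hd₂
    obtain ⟨hp₁, hne₁⟩ := hd₁
    obtain ⟨hp₂, hne₂⟩ := hd₂
    rw [Set.mem_singleton_iff] at hne₁ hne₂
    rw [hgeq]
    obtain ⟨x₁, hx₁, hm₁, -, hg₁⟩ := main d₁ hne₁
    obtain ⟨x₂, hx₂, hm₂, -, hg₂⟩ := main d₂ hne₂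
    rw [hg₁.gradient, hg₂.gradient]
    rcases le_total (suppFn K d₂) (suppFn K d₁) with hord | hord
    · exact holder_core hKcomp hKconv hKsymm hKi hα hq huc hne₁ hne₂ hp₁ hp₂
        hx₁ hm₁ hx₂ hm₂ hord
    · have hswap := holder_core hKcomp hKconv hKsymm hKi hα hq huc hne₂ hne₁ hp₂ hp₁
        hx₂ hm₂ hx₁ hm₁ hord
      have e1 : gauge K (suppFn K d₁ • x₁ - suppFn K d₂ • x₂)
          = gauge K (suppFn K d₂ • x₂ - suppFn K d₁ • x₁) := by
        rw [show suppFn K d₁ • x₁ - suppFn K d₂ • x₂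
            = -(suppFn K d₂ • x₂ - suppFn K d₁ • x₁) from (neg_sub _ _).symm,
          gauge_neg hKsymm]
      have e2 : suppFn K (d₁ - d₂) = suppFn K (d₂ - d₁) := by
        rw [show d₁ - d₂ = -(d₂ - d₁) from (neg_sub _ _).symm,
          suppFn_neg hKcomp hK0 hKsymm]
      rw [e1, e2]
      exact hswap
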